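/- Let G=(V,E) be a finite connected graph with positive vertex measure μ and positive symmetric edge weights w. Let f:ℝ→ℝ satisfy f(t)=a e^t+g(t)e^t with a>0 a constant, g uniformly bounded on ℝ, g(t)→0 as t→±∞, and f(t)>0 for all t. Suppose c_n→c in ℝ and h_n(x)→h(x) for every x∈V, and u_n:V→ℝ is a sequence of solutions of −Δu_n = h_n(x) f(u_n(x)) − c_n on V. Then, after passing to a subsequence, one of the following alternatives holds: (1) u_n is uniformly bounded on V; or (2) u_n converges to −∞ uniformly on V; or (3) there exists x₀∈V such that h(x₀)=0 and u_n(x₀)→+∞; moreover in case (3) the sequence u_n is uniformly bounded on the set {x∈V : h(x)>0} and is uniformly bounded from below on all of V. -/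

import Mathlib

open Filter Finset

private lemma seq_abs_bdd {s : ℕ → ℝ} {r : ℝ} (h : Filter.Tendsto s atTop (nhds r)) :
    ∃ C, 0 ≤ C ∧ ∀ k, |s k| ≤ C := by
  obtain ⟨N, hN⟩ := (Metric.tendsto_atTop.mp h) 1 one_pos
  have hsum : (0:ℝ) ≤ ∑ i ∈ Finset.range N, |s i| :=
    Finset.sum_nonneg fun i _ => abs_nonneg _
  refine ⟨|r| + 1 + ∑ i ∈ Finset.range N, |s i|, by positivity, fun k => ?_⟩
  rcases le_or_gt N k with hk | hk
  · have h1 := hN k hk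
    rw [Real.dist_eq] at h1
    have h2 : |s k| ≤ |s k - r| + |r| := by
      calc |s k| = |s k - r + r| := by ring_nf
        _ ≤ |s k - r| + |r| := abs_add_le _ _
    linarith
  · have h1 : |s k| ≤ ∑ i ∈ Finset.range N, |s i| :=
      Finset.single_le_sum (fun i _ => abs_nonneg (s i)) (Finset.mem_range.mpr hk)
    have : (0:ℝ) ≤ |r| + 1 := by positivity
    linarith

private lemma seq_lb {s : ℕ → ℝ} {r : ℝ} (h : ∀ᶠ k in atTop, r ≤ s k) :
    ∃ m, m ≤ 0 ∧ ∀ k, m ≤ s k := by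
  obtain ⟨N, hN⟩ := eventually_atTop.mp h
  have hsum : (0:ℝ) ≤ ∑ i ∈ Finset.range N, |s i| :=
    Finset.sum_nonneg fun i _ => abs_nonneg _
  refine ⟨min r 0 - ∑ i ∈ Finset.range N, |s i|, ?_, fun k => ?_⟩
  · have := min_le_right r 0; linarith
  · rcases le_or_gt N k with hk | hk
    · have := hN k hk; have := min_le_left r 0; linarith
    · have h1 : |s k| ≤ ∑ i ∈ Finset.range N, |s i| :=
        Finset.single_le_sum (fun i _ => abs_nonneg (s i)) (Finset.mem_range.mpr hk)
      have h2 := neg_abs_le (s k)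
      have := min_le_right r 0
      linarith

private lemma exp_quad {t : ℝ} (ht : 0 ≤ t) : t^2/4 ≤ Real.exp t := by
  have h1 := Real.add_one_le_exp (t/2)
  have h2 : Real.exp (t/2) * Real.exp (t/2) = Real.exp t := by
    rw [← Real.exp_add]; ring_nf
  nlinarith [Real.exp_pos (t/2)]

private lemma arith_exp {α β K m t : ℝ} (hα : 0 < α) (hK : 0 ≤ K)
    (ht : max 1 (4 * (K * (1 + |m|) + |β| + 1) / α) ≤ t) :
    K * (t - m) < α * Real.exp t - β := by
  have h1 : (1:ℝ) ≤ t := le_trans (le_max_left _ _) ht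
  have h2 : 4 * (K * (1 + |m|) + |β| + 1) / α ≤ t := le_trans (le_max_right _ _) ht
  have h3 : 4 * (K * (1 + |m|) + |β| + 1) ≤ α * t := by
    rw [div_le_iff₀ hα] at h2; linarith
  have h4 : t^2/4 ≤ Real.exp t := exp_quad (by linarith)
  have h5 : -|m| ≤ m := neg_abs_le m
  have h6 : β ≤ |β| := le_abs_self β
  have h7 : (0:ℝ) ≤ |m| := abs_nonneg m
  have h8 : (0:ℝ) ≤ |β| := abs_nonneg β
  nlinarith [mul_le_mul_of_nonneg_left h4 hα.le,
    mul_le_mul_of_nonneg_right h3 (show (0:ℝ) ≤ t by linarith),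
    mul_nonneg hK h7, mul_le_mul_of_nonneg_left h1 (mul_nonneg hK h7),
    mul_le_mul_of_nonneg_left h1 h8]

private lemma evt_abs {s : ℕ → ℝ} {r : ℝ} (h : Filter.Tendsto s atTop (nhds r)) :
    ∀ᶠ k in atTop, |s k| ≤ |r| + 1 := by
  have h1 : ∀ᶠ k in atTop, dist (s k) r < 1 :=
    (Metric.tendsto_nhds.mp h) 1 one_pos
  refine h1.mono fun k hk => ?_
  rw [Real.dist_eq] at hk
  calc |s k| = |s k - r + r| := by ring_nf
    _ ≤ |s k - r| + |r| := abs_add_le _ _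
    _ ≤ |r| + 1 := by linarith

private lemma ereal_tri (l : EReal) : l = ⊥ ∨ l = ⊤ ∨ ∃ r : ℝ, l = r := by
  induction l using EReal.rec with
  | bot => left; rfl
  | coe r => right; right; exact ⟨r, rfl⟩
  | top => right; left; rfl

private lemma sum_split {V : Type*} [Fintype V] [DecidableEq V] (G : SimpleGraph V)
    [DecidableRel G.Adj] (w : V → V → ℝ) (hw : ∀ x y, w x y = w y x) (uf : V → ℝ)
    (A : Finset V) :
    ∑ x ∈ A, ∑ y ∈ G.neighborFinset x, w x y * (uf x - uf y)
      = ∑ x ∈ A, ∑ y ∈ G.neighborFinset x \ A, w x y * (uf x - uf y) := by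
  have hsplit : ∀ x ∈ A, ∑ y ∈ G.neighborFinset x, w x y * (uf x - uf y)
      = (∑ y ∈ G.neighborFinset x ∩ A, w x y * (uf x - uf y))
        + ∑ y ∈ G.neighborFinset x \ A, w x y * (uf x - uf y) :=
    fun x _ => (Finset.sum_inter_add_sum_sdiff _ _ _).symm
  rw [Finset.sum_congr rfl hsplit, Finset.sum_add_distrib]
  have hrw : ∀ x ∈ A, ∑ y ∈ G.neighborFinset x ∩ A, w x y * (uf x - uf y)
      = ∑ y ∈ A, (if G.Adj x y then w x y * (uf x - uf y) else 0) := by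
    intro x _
    rw [Finset.inter_comm, ← Finset.sum_ite_mem A (G.neighborFinset x)
      (fun y => w x y * (uf x - uf y))]
    exact Finset.sum_congr rfl fun y _ => by
      by_cases hxy : G.Adj x y <;> simp [hxy]
  have hzero : ∑ x ∈ A, ∑ y ∈ A, (if G.Adj x y then w x y * (uf x - uf y) else 0) = 0 := by
    set q : V → V → ℝ := fun x y => if G.Adj x y then w x y * (uf x - uf y) else 0 with hq
    have hanti : ∀ x y, q x y = - q y x := by
      intro x y; by_cases hxy : G.Adj x y
      · simp only [hq, if_pos hxy, if_pos hxy.symm]; rw [hw]; ring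
      · have hyx : ¬ G.Adj y x := fun hcon => hxy hcon.symm
        simp [hq, hxy, hyx]
    have hkey : ∑ x ∈ A, ∑ y ∈ A, q x y = - ∑ x ∈ A, ∑ y ∈ A, q x y := by
      calc ∑ x ∈ A, ∑ y ∈ A, q x y = ∑ y ∈ A, ∑ x ∈ A, q x y := Finset.sum_comm
        _ = ∑ y ∈ A, ∑ x ∈ A, (- q y x) :=
            Finset.sum_congr rfl fun y _ => Finset.sum_congr rfl fun x _ => hanti x y
        _ = - ∑ y ∈ A, ∑ x ∈ A, q y x := by
            simp [Finset.sum_neg_distrib]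
    linarith
  rw [Finset.sum_congr rfl hrw, hzero, zero_add]

private lemma crossing {V : Type*} [Fintype V] {G : SimpleGraph V} (hconn : G.Connected)
    {A : Finset V} (h1 : A.Nonempty) (h2 : A ≠ Finset.univ) :
    ∃ x ∈ A, ∃ y, y ∉ A ∧ G.Adj x y := by
  obtain ⟨x, hx⟩ := h1
  have hy : ∃ y, y ∉ A := by
    by_contra hcon; push_neg at hcon
    exact h2 (Finset.eq_univ_iff_forall.mpr hcon)
  obtain ⟨y, hy⟩ := hy
  have key : ∀ (x y : V) (_ : G.Walk x y), x ∈ A → y ∉ A →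
      ∃ a ∈ A, ∃ b, b ∉ A ∧ G.Adj a b := by
    intro x y p
    induction p with
    | nil => intro hx hy; exact absurd hx hy
    | @cons x z y hadj p ih =>
      intro hx hy
      by_cases hz : z ∈ A
      · exact ih hz hy
      · exact ⟨x, hx, z, hz, hadj⟩
  exact (hconn x y).elim fun p => key x y p hx hy

set_option maxHeartbeats 1000000 in
theorem stmt1 {V : Type*} [Fintype V] [Nonempty V]
    (G : SimpleGraph V) [DecidableRel G.Adj] (hconn : G.Connected)
    (μ : V → ℝ) (hμ : ∀ x, 0 < μ x)
    (w : V → V → ℝ) (hwsymm : ∀ x y, w x y = w y x)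
    (hwpos : ∀ x y, G.Adj x y → 0 < w x y)
    (f g : ℝ → ℝ) (a : ℝ) (ha : 0 < a)
    (hf : ∀ t, f t = a * Real.exp t + g t * Real.exp t)
    (hgbdd : ∃ M : ℝ, ∀ t, |g t| ≤ M)
    (hgtop : Filter.Tendsto g Filter.atTop (nhds 0))
    (hgbot : Filter.Tendsto g Filter.atBot (nhds 0))
    (hfpos : ∀ t, 0 < f t)
    (c : ℝ) (cseq : ℕ → ℝ) (hc : Filter.Tendsto cseq Filter.atTop (nhds c))
    (h : V → ℝ) (hseq : ℕ → V → ℝ)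
    (hh : ∀ x, Filter.Tendsto (fun k => hseq k x) Filter.atTop (nhds (h x)))
    (u : ℕ → V → ℝ)
    (hu : ∀ k x, -((1 / μ x) * ∑ y ∈ G.neighborFinset x, w x y * (u k y - u k x))
        = hseq k x * f (u k x) - cseq k) :
    ∃ φ : ℕ → ℕ, StrictMono φ ∧
      ((∃ C : ℝ, ∀ k x, |u (φ k) x| ≤ C) ∨
       (∀ M : ℝ, ∃ N : ℕ, ∀ k ≥ N, ∀ x, u (φ k) x < M) ∨
       (∃ x₀, h x₀ = 0 ∧
          Filter.Tendsto (fun k => u (φ k) x₀) Filter.atTop Filter.atTop ∧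
          (∃ C : ℝ, ∀ k x, 0 < h x → |u (φ k) x| ≤ C) ∧
          (∃ C : ℝ, ∀ k x, -C ≤ u (φ k) x))) := by
  classical
  obtain ⟨M, hM⟩ := hgbdd
  have hM0 : 0 ≤ M := le_trans (abs_nonneg _) (hM 0)
  have hfub : ∀ t, f t ≤ (a + M) * Real.exp t := by
    intro t; rw [hf t]
    have h1 : g t ≤ M := le_trans (le_abs_self _) (hM t)
    nlinarith [Real.exp_pos t]
  have hflb : ∃ T : ℝ, ∀ t, T ≤ t → a / 2 * Real.exp t ≤ f t := by
    have hev : ∀ᶠ t in Filter.atTop, g t ∈ Set.Ioo (-(a/2)) (a/2) :=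
      hgtop (Ioo_mem_nhds (by linarith) (by linarith))
    obtain ⟨T, hT⟩ := Filter.eventually_atTop.mp hev
    refine ⟨T, fun t ht => ?_⟩
    have h1 := (hT t ht).1
    rw [hf t]; nlinarith [Real.exp_pos t]
  obtain ⟨T, hT⟩ := hflb
  have hfsmall : ∃ T' : ℝ, ∀ t, t ≤ T' → f t ≤ 1 := by
    refine ⟨Real.log (1 / (a + M + 1)), fun t ht => ?_⟩
    have h1 : Real.exp t ≤ 1 / (a + M + 1) := by
      calc Real.exp t ≤ Real.exp (Real.log (1 / (a + M + 1))) := Real.exp_le_exp.mpr ht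
        _ = 1 / (a + M + 1) := Real.exp_log (by positivity)
    have h2 := hfub t
    have h3 : (a + M) * Real.exp t ≤ (a + M) * (1 / (a + M + 1)) :=
      mul_le_mul_of_nonneg_left h1 (by linarith)
    have h4 : (a + M) * (1 / (a + M + 1)) ≤ 1 := by
      rw [mul_one_div, div_le_one (by linarith)]; linarith
    linarith
  obtain ⟨T', hT'⟩ := hfsmall
  -- subsequence extraction via compactness of (V → EReal)
  obtain ⟨L, -, φ, hφ, hLim⟩ :=
    isCompact_univ.tendsto_subseq
      (x := fun k => fun x => ((u k x : EReal))) (fun n => Set.mem_univ _)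
  refine ⟨φ, hφ, ?_⟩
  set v : ℕ → V → ℝ := fun k x => u (φ k) x with hvdef
  have hL : ∀ x, Filter.Tendsto (fun k => ((v k x : EReal))) Filter.atTop (nhds (L x)) :=
    fun x => (tendsto_pi_nhds.mp hLim) x
  have hφt : Filter.Tendsto φ Filter.atTop Filter.atTop := hφ.tendsto_atTop
  have hc' : Filter.Tendsto (fun k => cseq (φ k)) Filter.atTop (nhds c) := hc.comp hφt
  have hh' : ∀ x, Filter.Tendsto (fun k => hseq (φ k) x) Filter.atTop (nhds (h x)) :=
    fun x => (hh x).comp hφt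
  have heq : ∀ k x, μ x * (hseq (φ k) x * f (v k x) - cseq (φ k))
      = ∑ y ∈ G.neighborFinset x, w x y * (v k x - v k y) := by
    intro k x
    have h0 := hu (φ k) x
    have hμx : μ x ≠ 0 := (hμ x).ne'
    have hneg : ∑ y ∈ G.neighborFinset x, w x y * (v k x - v k y)
        = - ∑ y ∈ G.neighborFinset x, w x y * (u (φ k) y - u (φ k) x) := by
      rw [← Finset.sum_neg_distrib]
      exact Finset.sum_congr rfl fun y _ => by simp only [hvdef]; ring
    rw [hneg, ← h0]
    field_simp
  -- basic per-vertex limit facts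
  have hbot : ∀ x, L x = ⊥ → Filter.Tendsto (fun k => v k x) Filter.atTop Filter.atBot := by
    intro x hx
    rw [Filter.tendsto_atBot]
    intro b
    have hlt : L x < ((b : ℝ) : EReal) := by rw [hx]; exact EReal.bot_lt_coe b
    exact ((hL x).eventually_lt_const hlt).mono fun k hk =>
      (EReal.coe_lt_coe_iff.mp hk).le
  have htop : ∀ x, L x = ⊤ → Filter.Tendsto (fun k => v k x) Filter.atTop Filter.atTop := by
    intro x hx
    rw [Filter.tendsto_atTop]
    intro b
    have hlt : ((b : ℝ) : EReal) < L x := by rw [hx]; exact EReal.coe_lt_top b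
    exact ((hL x).eventually_const_lt hlt).mono fun k hk =>
      (EReal.coe_lt_coe_iff.mp hk).le
  have hlow : ∀ x, L x ≠ ⊥ → ∃ m, m ≤ 0 ∧ ∀ k, m ≤ v k x := by
    intro x hx
    obtain ⟨r, hr1, hr2⟩ := EReal.lt_iff_exists_real_btwn.mp (bot_lt_iff_ne_bot.mpr hx)
    exact seq_lb (((hL x).eventually_const_lt hr2).mono fun k hk =>
      (EReal.coe_lt_coe_iff.mp hk).le)
  have hupp : ∀ x, L x ≠ ⊤ → ∃ r : ℝ, ∀ᶠ k in Filter.atTop, v k x ≤ r := by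
    intro x hx
    obtain ⟨r, hr1, hr2⟩ := EReal.lt_iff_exists_real_btwn.mp (lt_top_iff_ne_top.mpr hx)
    exact ⟨r, ((hL x).eventually_lt_const hr1).mono fun k hk =>
      (EReal.coe_lt_coe_iff.mp hk).le⟩
  have hrealt : ∀ x, L x ≠ ⊥ → L x ≠ ⊤ →
      ∃ r : ℝ, Filter.Tendsto (fun k => v k x) Filter.atTop (nhds r) := by
    intro x h1 h2
    rcases ereal_tri (L x) with h3 | h3 | ⟨r, hr⟩
    · exact absurd h3 h1
    · exact absurd h3 h2
    · exact ⟨r, EReal.tendsto_coe.mp (hr ▸ hL x)⟩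
  set A : Finset V := Finset.univ.filter (fun x => L x = ⊥) with hAdef
  set C : Finset V := Finset.univ.filter (fun x => L x = ⊤) with hCdef
  have hmemA : ∀ x, x ∈ A ↔ L x = ⊥ := fun x => by simp [hAdef]
  have hmemC : ∀ x, x ∈ C ↔ L x = ⊤ := fun x => by simp [hCdef]
  have hident : ∀ (k : ℕ) (s : Finset V),
      ∑ x ∈ s, μ x * (hseq (φ k) x * f (v k x) - cseq (φ k))
        = ∑ x ∈ s, ∑ y ∈ G.neighborFinset x \ s, w x y * (v k x - v k y) := by
    intro k s
    rw [Finset.sum_congr rfl fun x _ => heq k x]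
    exact sum_split G w hwsymm (v k) s
  by_cases hAe : A = ∅
  · have hnB : ∀ x, L x ≠ ⊥ := by
      intro x hcon
      have : x ∈ A := (hmemA x).mpr hcon
      rw [hAe] at this
      exact absurd this (Finset.notMem_empty x)
    -- global lower bound (holds for all k)
    have hlow' : ∀ x, ∃ m, m ≤ 0 ∧ ∀ k, m ≤ v k x := fun x => hlow x (hnB x)
    choose mf hmf0 hmf using hlow'
    set mlow : ℝ := ∑ x, mf x with hmlowdef
    have hmlow_le : ∀ x, mlow ≤ mf x := by
      intro x
      rw [hmlowdef, ← Finset.add_sum_erase _ _ (Finset.mem_univ x)]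
      have hrest : ∑ y ∈ Finset.univ.erase x, mf y ≤ 0 :=
        Finset.sum_nonpos fun y _ => hmf0 y
      linarith
    have hmlow : ∀ k x, mlow ≤ v k x := fun k x => le_trans (hmlow_le x) (hmf x k)
    by_cases hCe : C = ∅
    · -- alternative 1
      refine Or.inl ?_
      have hbx : ∀ x, ∃ Cx, 0 ≤ Cx ∧ ∀ k, |v k x| ≤ Cx := by
        intro x
        have h2 : L x ≠ ⊤ := by
          intro hcon
          have : x ∈ C := (hmemC x).mpr hcon
          rw [hCe] at this
          exact absurd this (Finset.notMem_empty x)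
        obtain ⟨r, hr⟩ := hrealt x (hnB x) h2
        exact seq_abs_bdd hr
      choose Cf hCf0 hCf using hbx
      exact ⟨∑ x, Cf x, fun k x => le_trans (hCf x k)
        (Finset.single_le_sum (fun i _ => hCf0 i) (Finset.mem_univ x))⟩
    · -- alternative 3
      have hCne : C.Nonempty := Finset.nonempty_iff_ne_empty.mpr hCe
      -- Step b1 : h ≤ 0 on C
      have hb1 : ∀ x ∈ C, h x ≤ 0 := by
        intro x hxC
        by_contra hpos
        push_neg at hpos
        set K : ℝ := ∑ y ∈ G.neighborFinset x, w x y with hKdef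
        have hK0 : 0 ≤ K := Finset.sum_nonneg fun y hy =>
          (hwpos x y ((SimpleGraph.mem_neighborFinset _ _ _).mp hy)).le
        have hest : ∀ k, μ x * (hseq (φ k) x * f (v k x) - cseq (φ k))
            ≤ K * (v k x - mlow) := by
          intro k
          rw [heq k x]
          calc ∑ y ∈ G.neighborFinset x, w x y * (v k x - v k y)
              ≤ ∑ y ∈ G.neighborFinset x, w x y * (v k x - mlow) := by
                refine Finset.sum_le_sum fun y hy => ?_
                have hw0 : 0 ≤ w x y := (hwpos x y ((SimpleGraph.mem_neighborFinset _ _ _).mp hy)).le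
                have hm := hmlow k y
                nlinarith
            _ = K * (v k x - mlow) := by rw [hKdef, ← Finset.sum_mul]
        set α : ℝ := μ x * (h x / 2 * (a / 2)) with hαdef
        set β : ℝ := μ x * (|c| + 1) with hβdef
        have hα : 0 < α := by
          rw [hαdef]
          have := hμ x
          positivity
        have htt : Filter.Tendsto (fun k => v k x) Filter.atTop Filter.atTop :=
          htop x ((hmemC x).mp hxC)
        have e1 : ∀ᶠ k in Filter.atTop, h x / 2 < hseq (φ k) x :=
          (hh' x).eventually_const_lt (by linarith)
        have e2 : ∀ᶠ k in Filter.atTop, |cseq (φ k)| ≤ |c| + 1 := evt_abs hc'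
        have e3 : ∀ᶠ k in Filter.atTop, T ≤ v k x := htt.eventually_ge_atTop T
        have e4 : ∀ᶠ k in Filter.atTop,
            max 1 (4 * (K * (1 + |mlow|) + |β| + 1) / α) ≤ v k x :=
          htt.eventually_ge_atTop _
        obtain ⟨k, hk1, hk2, hk3, hk4⟩ := (e1.and (e2.and (e3.and e4))).exists
        have hf1 : a / 2 * Real.exp (v k x) ≤ f (v k x) := hT _ hk3
        have hmul : h x / 2 * (a / 2 * Real.exp (v k x)) ≤ hseq (φ k) x * f (v k x) := by
          apply mul_le_mul hk1.le hf1 (by positivity) (by linarith)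
        have hstep : h x / 2 * (a / 2) * Real.exp (v k x) - (|c| + 1)
            ≤ hseq (φ k) x * f (v k x) - cseq (φ k) := by
          have habs := abs_le.mp hk2
          nlinarith
        have hq : α * Real.exp (v k x) - β ≤ K * (v k x - mlow) := by
          have h5 := mul_le_mul_of_nonneg_left hstep (hμ x).le
          have h6 := hest k
          rw [hαdef, hβdef]
          nlinarith
        have := arith_exp hα hK0 hk4
        linarith
      -- Step b2 : exists x₀ in C with h x₀ = 0
      have hb2 : ∃ x₀ ∈ C, h x₀ = 0 := by
        by_contra hcon
        push_neg at hcon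
        have hneg : ∀ x ∈ C, h x < 0 := fun x hx => lt_of_le_of_ne (hb1 x hx) (hcon x hx)
        have hupfun : ∀ y, ∃ s, ∀ᶠ k in Filter.atTop, y ∉ C → v k y ≤ s := by
          intro y
          by_cases hy : y ∈ C
          · exact ⟨0, Filter.Eventually.of_forall fun k hcon' => absurd hy hcon'⟩
          · have h2 : L y ≠ ⊤ := fun hcon' => hy ((hmemC y).mpr hcon')
            obtain ⟨r, hr⟩ := hupp y h2
            exact ⟨r, hr.mono fun k hk _ => hk⟩
        choose sf hsf using hupfun
        set sbig : ℝ := Finset.univ.sup' Finset.univ_nonempty sf with hsbigdef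
        have eRHS : ∀ᶠ k in Filter.atTop, 0 ≤ ∑ x ∈ C, ∑ y ∈ G.neighborFinset x \ C,
            w x y * (v k x - v k y) := by
          have e1 : ∀ᶠ k in Filter.atTop, ∀ y, y ∉ C → v k y ≤ sbig := by
            rw [Filter.eventually_all]
            intro y
            exact (hsf y).mono fun k hk hy =>
              le_trans (hk hy) (Finset.le_sup' sf (Finset.mem_univ y))
          have e2 : ∀ᶠ k in Filter.atTop, ∀ x, x ∈ C → sbig ≤ v k x := by
            rw [Filter.eventually_all]
            intro x
            by_cases hx : x ∈ C
            · exact ((htop x ((hmemC x).mp hx)).eventually_ge_atTop sbig).mono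
                fun k hk _ => hk
            · exact Filter.Eventually.of_forall fun k hcon' => absurd hcon' hx
          refine (e1.and e2).mono fun k hk => ?_
          obtain ⟨hk1, hk2⟩ := hk
          refine Finset.sum_nonneg fun x hx => Finset.sum_nonneg fun y hy => ?_
          obtain ⟨hyN, hyC⟩ := Finset.mem_sdiff.mp hy
          have hadj := (SimpleGraph.mem_neighborFinset _ _ _).mp hyN
          have hw0 := (hwpos x y hadj).le
          have h1 := hk1 y hyC
          have h2 := hk2 x hx
          nlinarith
        have eLHS : ∀ᶠ k in Filter.atTop,
            ∑ x ∈ C, μ x * (hseq (φ k) x * f (v k x) - cseq (φ k)) < 0 := by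
          have hterm : ∀ x, ∀ᶠ k in Filter.atTop,
              x ∈ C → μ x * (hseq (φ k) x * f (v k x) - cseq (φ k)) ≤ -μ x := by
            intro x
            by_cases hx : x ∈ C
            · have hhx : h x < 0 := hneg x hx
              set γ : ℝ := -(h x / 2) * (a / 2) with hγdef
              have hγ : 0 < γ := by rw [hγdef]; nlinarith
              have htt := htop x ((hmemC x).mp hx)
              have e1 : ∀ᶠ k in Filter.atTop, hseq (φ k) x < h x / 2 :=
                (hh' x).eventually_lt_const (by linarith)
              have e2 : ∀ᶠ k in Filter.atTop, |cseq (φ k)| ≤ |c| + 1 := evt_abs hc'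
              have e3 : ∀ᶠ k in Filter.atTop, T ≤ v k x := htt.eventually_ge_atTop T
              have e4 : ∀ᶠ k in Filter.atTop, Real.log ((|c| + 2) / γ) ≤ v k x :=
                htt.eventually_ge_atTop _
              refine (e1.and (e2.and (e3.and e4))).mono fun k hk _ => ?_
              obtain ⟨hk1, hk2, hk3, hk4⟩ := hk
              have hf1 : a / 2 * Real.exp (v k x) ≤ f (v k x) := hT _ hk3
              have hexp : (|c| + 2) / γ ≤ Real.exp (v k x) := by
                calc (|c| + 2) / γ = Real.exp (Real.log ((|c| + 2) / γ)) :=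
                      (Real.exp_log (by positivity)).symm
                  _ ≤ Real.exp (v k x) := Real.exp_le_exp.mpr hk4
              have hexp2 : |c| + 2 ≤ Real.exp (v k x) * γ := (div_le_iff₀ hγ).mp hexp
              have h1 : hseq (φ k) x * f (v k x) ≤ h x / 2 * f (v k x) :=
                mul_le_mul_of_nonneg_right hk1.le (hfpos _).le
              have h2 : h x / 2 * f (v k x) ≤ h x / 2 * (a / 2 * Real.exp (v k x)) :=
                mul_le_mul_of_nonpos_left hf1 (by linarith)
              have h3 : h x / 2 * (a / 2 * Real.exp (v k x)) = -(γ * Real.exp (v k x)) := by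
                rw [hγdef]; ring
              have habs := abs_le.mp hk2
              have hgoal : hseq (φ k) x * f (v k x) - cseq (φ k) ≤ -1 := by
                nlinarith
              nlinarith [hμ x]
            · exact Filter.Eventually.of_forall fun k hcon' => absurd hcon' hx
          have hall : ∀ᶠ k in Filter.atTop, ∀ x, x ∈ C →
              μ x * (hseq (φ k) x * f (v k x) - cseq (φ k)) ≤ -μ x :=
            Filter.eventually_all.2 hterm
          refine hall.mono fun k hk => ?_
          have hsum : ∑ x ∈ C, μ x * (hseq (φ k) x * f (v k x) - cseq (φ k))
              ≤ ∑ x ∈ C, -μ x := Finset.sum_le_sum fun x hx => hk x hx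
          have hpos : 0 < ∑ x ∈ C, μ x := Finset.sum_pos (fun x _ => hμ x) hCne
          have hneg' : ∑ x ∈ C, -μ x = -∑ x ∈ C, μ x := Finset.sum_neg_distrib _
          linarith
        obtain ⟨k, hk1, hk2⟩ := (eRHS.and eLHS).exists
        have := hident k C
        linarith
      obtain ⟨x₀, hx₀C, hx₀⟩ := hb2
      refine Or.inr (Or.inr ⟨x₀, hx₀, htop x₀ ((hmemC x₀).mp hx₀C), ?_, ?_⟩)
      · have hbx : ∀ x, ∃ Cx, 0 ≤ Cx ∧ (0 < h x → ∀ k, |v k x| ≤ Cx) := by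
          intro x
          by_cases hx : 0 < h x
          · have h2 : L x ≠ ⊤ := by
              intro hcon
              have : x ∈ C := (hmemC x).mpr hcon
              exact absurd hx (not_lt.mpr (hb1 x this))
            obtain ⟨r, hr⟩ := hrealt x (hnB x) h2
            obtain ⟨Cx, hCx0, hCx⟩ := seq_abs_bdd hr
            exact ⟨Cx, hCx0, fun _ => hCx⟩
          · exact ⟨0, le_refl 0, fun hcon => absurd hcon hx⟩
        choose Cf hCf0 hCf using hbx
        refine ⟨∑ x, Cf x, fun k x hx => ?_⟩
        exact le_trans (hCf x hx k)
          (Finset.single_le_sum (fun i _ => hCf0 i) (Finset.mem_univ x))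
      · exact ⟨-mlow, fun k x => by have := hmlow k x; linarith⟩
  · by_cases hAu : A = Finset.univ
    · -- alternative 2
      refine Or.inr (Or.inl ?_)
      intro M0
      have hev : ∀ᶠ k in Filter.atTop, ∀ x, v k x < M0 := by
        rw [Filter.eventually_all]
        intro x
        have hxA : L x = ⊥ := (hmemA x).mp (hAu ▸ Finset.mem_univ x)
        exact (hbot x hxA).eventually_lt_atBot M0
      obtain ⟨N, hN⟩ := Filter.eventually_atTop.mp hev
      exact ⟨N, fun k hk x => hN k hk x⟩
    · -- impossible : A nonempty and proper
      exfalso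
      have hAne : A.Nonempty := Finset.nonempty_iff_ne_empty.mpr hAe
      obtain ⟨xs, hxs, ys, hys, hadj⟩ := crossing hconn hAne hAu
      have hlbfun : ∀ y, ∃ m, m ≤ 0 ∧ ∀ k, y ∉ A → m ≤ v k y := by
        intro y
        by_cases hy : y ∈ A
        · exact ⟨0, le_refl 0, fun k hcon => absurd hy hcon⟩
        · obtain ⟨m, hm0, hm⟩ := hlow y (fun hcon => hy ((hmemA y).mpr hcon))
          exact ⟨m, hm0, fun k _ => hm k⟩
      choose mf hmf0 hmf using hlbfun
      set mlow : ℝ := ∑ x, mf x with hmlowdef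
      have hmlow_le : ∀ x, mlow ≤ mf x := by
        intro x
        rw [hmlowdef, ← Finset.add_sum_erase _ _ (Finset.mem_univ x)]
        have hrest : ∑ y ∈ Finset.univ.erase x, mf y ≤ 0 :=
          Finset.sum_nonpos fun y _ => hmf0 y
        linarith
      have hmlow : ∀ k y, y ∉ A → mlow ≤ v k y := fun k y hy =>
        le_trans (hmlow_le y) (hmf y k hy)
      set B : ℝ := ∑ x ∈ A, μ x * (|h x| + |c| + 2) with hBdef
      have hB0 : 0 ≤ B := Finset.sum_nonneg fun x _ =>
        mul_nonneg (hμ x).le (by positivity)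
      have hws : 0 < w xs ys := hwpos _ _ hadj
      have e1 : ∀ᶠ k in Filter.atTop, |cseq (φ k)| ≤ |c| + 1 := evt_abs hc'
      have e2 : ∀ᶠ k in Filter.atTop, ∀ x, x ∈ A → |hseq (φ k) x| ≤ |h x| + 1 := by
        rw [Filter.eventually_all]
        intro x
        exact (evt_abs (hh' x)).mono fun k hk _ => hk
      have e3 : ∀ᶠ k in Filter.atTop, ∀ x, x ∈ A → f (v k x) ≤ 1 ∧ v k x ≤ mlow := by
        rw [Filter.eventually_all]
        intro x
        by_cases hx : x ∈ A
        · have hbt := hbot x ((hmemA x).mp hx)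
          exact ((hbt.eventually_le_atBot T').and (hbt.eventually_le_atBot mlow)).mono
            fun k hk _ => ⟨hT' _ hk.1, hk.2⟩
        · exact Filter.Eventually.of_forall fun k hcon => absurd hcon hx
      have e4 : ∀ᶠ k in Filter.atTop, v k xs ≤ mlow - (B + 1) / w xs ys :=
        (hbot xs ((hmemA xs).mp hxs)).eventually_le_atBot _
      obtain ⟨k, hk1, hk2, hk3, hk4⟩ := (e1.and (e2.and (e3.and e4))).exists
      have hLHS : -B ≤ ∑ x ∈ A, μ x * (hseq (φ k) x * f (v k x) - cseq (φ k)) := by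
        rw [hBdef, ← Finset.sum_neg_distrib]
        refine Finset.sum_le_sum fun x hx => ?_
        have h1 := hk2 x hx
        obtain ⟨h2, -⟩ := hk3 x hx
        have h3 := abs_le.mp hk1
        have h4 := abs_le.mp h1
        have h5 := (hfpos (v k x)).le
        have hμ0 := (hμ x).le
        have hud : -(|h x| + 1) ≤ hseq (φ k) x * f (v k x) := by
          nlinarith [mul_nonneg (show (0:ℝ) ≤ hseq (φ k) x + (|h x| + 1) by linarith)
            (hfpos (v k x)).le]
        have hin : -(|h x| + |c| + 2) ≤ hseq (φ k) x * f (v k x) - cseq (φ k) := by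
          linarith
        nlinarith [mul_le_mul_of_nonneg_left hin hμ0]
      have htermnp : ∀ x ∈ A, ∀ y ∈ G.neighborFinset x \ A,
          w x y * (v k x - v k y) ≤ 0 := by
        intro x hx y hy
        obtain ⟨hyN, hyA⟩ := Finset.mem_sdiff.mp hy
        have hw0 := (hwpos x y ((SimpleGraph.mem_neighborFinset _ _ _).mp hyN)).le
        have hm := hmlow k y hyA
        have hvx := (hk3 x hx).2
        nlinarith
      have hysN : ys ∈ G.neighborFinset xs \ A :=
        Finset.mem_sdiff.mpr ⟨(SimpleGraph.mem_neighborFinset _ _ _).mpr hadj, hys⟩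
      have hspecial : w xs ys * (v k xs - v k ys) ≤ -(B + 1) := by
        have hm := hmlow k ys hys
        have h1 : v k xs - v k ys ≤ -((B + 1) / w xs ys) := by linarith
        have h2 := mul_le_mul_of_nonneg_left h1 hws.le
        rw [mul_neg, mul_div_cancel₀ _ hws.ne'] at h2
        linarith
      have hinner_xs : ∑ y ∈ G.neighborFinset xs \ A, w xs y * (v k xs - v k y)
          ≤ -(B + 1) := by
        rw [← Finset.add_sum_erase _ _ hysN]
        have hrest : ∑ y ∈ (G.neighborFinset xs \ A).erase ys,
            w xs y * (v k xs - v k y) ≤ 0 :=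
          Finset.sum_nonpos fun y hy => htermnp xs hxs y (Finset.mem_of_mem_erase hy)
        linarith
      have hRHS : ∑ x ∈ A, ∑ y ∈ G.neighborFinset x \ A, w x y * (v k x - v k y)
          ≤ -(B + 1) := by
        rw [← Finset.add_sum_erase _ _ hxs]
        have hrest : ∑ x ∈ A.erase xs, ∑ y ∈ G.neighborFinset x \ A,
            w x y * (v k x - v k y) ≤ 0 :=
          Finset.sum_nonpos fun x hx =>
            Finset.sum_nonpos (htermnp x (Finset.mem_of_mem_erase hx))
        linarith
      have hid := hident k A
      linarith
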